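/- Let (W,S) be a finite Coxeter system with longest element w_0. For any two reduced words 𝔴, 𝔳 ∈ Red(w_0) there exists a finite sequence of indices i^{(1)}, …, i^{(m)} ∈ I such that e_{i^{(m)}} ∘ ⋯ ∘ e_{i^{(1)}}(𝔴) = 𝔳; that is, the transition graph of the exchange chain on Red(w_0) is strongly connected. -/

import Mathlib

open scoped Classical

noncomputable section

namespace ExchAux

open List CoxeterSystem

variable {B W : Type*} [Group W] {M : CoxeterMatrix B} (cs : CoxeterSystem M W)

local prefix:100 "σ" => cs.simple
local prefix:100 "π" => cs.wordProd
local prefix:100 "ℓ" => cs.length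

lemma ris_cons (i : B) (ω : List B) :
    cs.rightInvSeq (i :: ω) = ((π ω)⁻¹ * σ i * π ω) :: cs.rightInvSeq ω := rfl

lemma b_mul_rho (i i' : B) : σ i' * (σ i * σ i') = (σ i * σ i')⁻¹ * σ i' := by
  rw [mul_inv_rev, cs.inv_simple, cs.inv_simple, mul_assoc]

lemma K1 (i i' : B) (q : ℕ) :
    σ i' * (σ i * σ i') ^ q = ((σ i * σ i')⁻¹) ^ q * σ i' := by
  induction q with
  | zero => simp
  | succ q ih =>
      calc σ i' * (σ i * σ i') ^ (q + 1)
          = (σ i' * (σ i * σ i') ^ q) * (σ i * σ i') := by rw [pow_succ, mul_assoc]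
        _ = ((σ i * σ i')⁻¹) ^ q * (σ i' * (σ i * σ i')) := by rw [ih, mul_assoc]
        _ = ((σ i * σ i')⁻¹) ^ q * ((σ i * σ i')⁻¹ * σ i') := by rw [b_mul_rho]
        _ = ((σ i * σ i')⁻¹) ^ (q + 1) * σ i' := by rw [pow_succ, mul_assoc]

lemma head_eq (i i' : B) (n : ℕ) :
    (π (alternatingWord i i' n))⁻¹ * σ (if Even n then i' else i) * π (alternatingWord i i' n)
      = σ i' * (σ i * σ i') ^ n := by
  rw [prod_alternatingWord_eq_mul_pow]
  rcases Nat.even_or_odd n with he | ho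
  · obtain ⟨q, rfl⟩ := he
    have hq : (q + q) / 2 = q := by omega
    rw [if_pos ⟨q, rfl⟩, if_pos ⟨q, rfl⟩, hq, one_mul]
    calc ((σ i * σ i') ^ q)⁻¹ * σ i' * (σ i * σ i') ^ q
        = ((σ i * σ i')⁻¹) ^ q * (σ i' * (σ i * σ i') ^ q) := by rw [← inv_pow, mul_assoc]
      _ = ((σ i * σ i')⁻¹) ^ q * (((σ i * σ i')⁻¹) ^ q * σ i') := by rw [K1]
      _ = ((σ i * σ i')⁻¹) ^ (q + q) * σ i' := by rw [pow_add, mul_assoc]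
      _ = σ i' * (σ i * σ i') ^ (q + q) := (K1 cs i i' _).symm
  · obtain ⟨q, rfl⟩ := ho
    have hq : (2 * q + 1) / 2 = q := by omega
    have hne : ¬ Even (2 * q + 1) := by simp [Nat.even_add_one, parity_simps]
    rw [if_neg hne, if_neg hne, hq]
    have h2q : 2 * q = q + q := by omega
    calc (σ i' * (σ i * σ i') ^ q)⁻¹ * σ i * (σ i' * (σ i * σ i') ^ q)
        = ((σ i * σ i') ^ q)⁻¹ * (σ i' * σ i * σ i') * (σ i * σ i') ^ q := by
          rw [mul_inv_rev, cs.inv_simple]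
          simp [mul_assoc]
      _ = ((σ i * σ i')⁻¹) ^ q * (((σ i * σ i')⁻¹ * σ i') * (σ i * σ i') ^ q) := by
          rw [← inv_pow, ← b_mul_rho]
          simp [mul_assoc]
      _ = ((σ i * σ i')⁻¹) ^ q * ((σ i * σ i')⁻¹ * (((σ i * σ i')⁻¹) ^ q * σ i')) := by
          rw [mul_assoc ((σ i * σ i')⁻¹) (σ i'), K1]
      _ = ((σ i * σ i')⁻¹) ^ (q + 1 + q) * σ i' := by
          rw [pow_add, pow_add, pow_one]
          simp [mul_assoc]
      _ = σ i' * (σ i * σ i') ^ (2 * q + 1) := by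
          rw [K1]
          congr 2
          omega

lemma ris_alternatingWord (i i' : B) (n : ℕ) :
    cs.rightInvSeq (alternatingWord i i' n)
      = (List.range n).map (fun j => σ i' * (σ i * σ i') ^ (n - 1 - j)) := by
  induction n with
  | zero => simp [alternatingWord]
  | succ n ih =>
      rw [alternatingWord_succ', ris_cons, ih, range_succ_eq_map, map_cons, map_map]
      congr 1
      · simpa using head_eq cs i i' n
      · apply map_congr_left
        intro j hj
        simp only [Function.comp_apply, Nat.succ_eq_add_one]
        congr 2
        omega

lemma count_ris_alt_even (i i' : B) (w : W) :
    ¬ Odd ((cs.rightInvSeq (alternatingWord i i' (M i i' + M i i'))).count w) := by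
  set m := M.M i i' with hm
  have hsplit : cs.rightInvSeq (alternatingWord i i' (m + m))
      = ((List.range m).map (fun j => σ i' * (σ i * σ i') ^ (m - 1 - j)))
        ++ ((List.range m).map (fun j => σ i' * (σ i * σ i') ^ (m - 1 - j))) := by
    rw [ris_alternatingWord, range_add, map_append, map_map]
    congr 1
    · apply map_congr_left
      intro j hj
      rw [mem_range] at hj
      have : m + m - 1 - j = m + (m - 1 - j) := by omega
      rw [this, pow_add]
      have hrel : (σ i * σ i') ^ m = 1 := cs.simple_mul_simple_pow i i'
      rw [hrel, one_mul]
    · apply map_congr_left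
      intro j hj
      simp only [Function.comp_apply]
      congr 2
      omega
  rw [hsplit, count_append, Nat.not_odd_iff_even]
  exact ⟨_, rfl⟩



lemma sandwich (i : B) (w : W) : σ i * (σ i * w * σ i) * σ i = w := by
  simp [mul_assoc, cs.simple_mul_simple_cancel_left]

/-- The sign-representation permutation attached to a simple generator. -/
def fmove (i : B) : Equiv.Perm (W × Bool) :=
  Function.Involutive.toPerm
    (fun p => (σ i * p.1 * σ i, if p.1 = σ i then !p.2 else p.2))
    (by
      rintro ⟨w, b⟩
      by_cases h : w = σ i
      · subst h
        simp [cs.simple_mul_simple_self]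
      · have h2 : ¬ (σ i * w * σ i = σ i) := by
          intro hc
          exact h (by rw [← sandwich cs i w, hc]; simp [cs.simple_mul_simple_self])
        simp [h, h2, sandwich cs i w])

lemma fmove_apply (i : B) (w : W) (b : Bool) :
    fmove cs i (w, b) = (σ i * w * σ i, if w = σ i then !b else b) := rfl

lemma prod_map_fmove (ω : List B) (w : W) (b : Bool) :
    (ω.map (fmove cs)).prod (w, b)
      = (π ω * w * (π ω)⁻¹,
          if Odd ((cs.rightInvSeq ω).count w) then !b else b) := by
  induction ω with
  | nil => simp
  | cons i ω ih =>
      rw [map_cons, prod_cons, Equiv.Perm.mul_apply, ih, fmove_apply]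
      have hcond : (π ω * w * (π ω)⁻¹ = σ i) ↔ (w = (π ω)⁻¹ * σ i * π ω) := by
        constructor
        · intro h; rw [← h]; group
        · intro h; rw [h]; group
      have hcount : (cs.rightInvSeq (i :: ω)).count w
          = (cs.rightInvSeq ω).count w + (if (π ω)⁻¹ * σ i * π ω = w then 1 else 0) := by
        rw [ris_cons, count_cons]
        simp
      refine Prod.ext ?_ ?_
      · simp only [wordProd_cons, mul_inv_rev, cs.inv_simple]
        simp [mul_assoc]
      · show (if π ω * w * (π ω)⁻¹ = σ i then !(if Odd ((cs.rightInvSeq ω).count w) then !b else b)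
              else (if Odd ((cs.rightInvSeq ω).count w) then !b else b))
            = if Odd ((cs.rightInvSeq (i :: ω)).count w) then !b else b
        rw [hcount]
        by_cases hw : w = (π ω)⁻¹ * σ i * π ω
        · rw [if_pos (hcond.mpr hw), if_pos hw.symm]
          by_cases ho : Odd ((cs.rightInvSeq ω).count w)
          · simp [ho, Nat.odd_add_one]
          · simp [ho, Nat.odd_add_one]
        · rw [if_neg (show ¬((π ω)⁻¹ * σ i * π ω = w) from fun h => hw h.symm),
            if_neg (fun h => hw (hcond.mp h))]
          simp

lemma pow_eq_prod (i i' : B) (k : ℕ) :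
    ((alternatingWord i i' (k + k)).map (fmove cs)).prod = (fmove cs i * fmove cs i') ^ k := by
  induction k with
  | zero => simp [alternatingWord]
  | succ k ih =>
      have h1 : (k + 1) + (k + 1) = (k + k) + 1 + 1 := by omega
      rw [h1, alternatingWord_succ', alternatingWord_succ',
        if_neg (by simp [Nat.even_add_one, parity_simps]), if_pos (by exact ⟨k, rfl⟩),
        map_cons, map_cons, prod_cons, prod_cons, ih, pow_succ']
      rw [mul_assoc]


lemma liftable : M.IsLiftable (fmove cs) := by
  intro i i'
  rw [← pow_eq_prod]
  apply Equiv.ext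
  rintro ⟨w, b⟩
  rw [prod_map_fmove]
  have h1 : π (alternatingWord i i' (M i i' + M i i')) = 1 := by
    rw [prod_alternatingWord_eq_mul_pow, if_pos ⟨M i i', rfl⟩, one_mul,
      (by omega : (M.M i i' + M.M i i') / 2 = M.M i i'), cs.simple_mul_simple_pow]
  rw [h1, if_neg (count_ris_alt_even cs i i' w)]
  simp

def phi : W →* Equiv.Perm (W × Bool) := cs.lift ⟨fmove cs, liftable cs⟩

lemma phi_wordProd (ω : List B) : phi cs (π ω) = (ω.map (fmove cs)).prod := by
  induction ω with
  | nil => simp [wordProd_nil]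
  | cons i ω ih => rw [wordProd_cons, map_cons, prod_cons, map_mul, ih, phi,
      cs.lift_apply_simple]

lemma count_parity {ω₁ ω₂ : List B} (h : π ω₁ = π ω₂) (w : W) :
    Odd ((cs.rightInvSeq ω₁).count w) ↔ Odd ((cs.rightInvSeq ω₂).count w) := by
  have h1 : (ω₁.map (fmove cs)).prod (w, false) = (ω₂.map (fmove cs)).prod (w, false) := by
    rw [← phi_wordProd, ← phi_wordProd, h]
  rw [prod_map_fmove, prod_map_fmove] at h1
  have h2 := congrArg Prod.snd h1
  by_cases c1 : Odd ((cs.rightInvSeq ω₁).count w) <;>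
    by_cases c2 : Odd ((cs.rightInvSeq ω₂).count w)
  · exact iff_of_true c1 c2
  · exfalso; simp [c1, c2] at h2
  · exfalso; simp [c1, c2] at h2
  · exact iff_of_false c1 c2

lemma ris_append (α β : List B) : cs.rightInvSeq (α ++ β)
    = (cs.rightInvSeq α).map (fun t => (π β)⁻¹ * t * π β) ++ cs.rightInvSeq β := by
  induction α with
  | nil => simp
  | cons a α ih =>
      rw [cons_append, ris_cons, ih, ris_cons, map_cons, cons_append]
      congr 1
      rw [wordProd_append, mul_inv_rev]
      simp [mul_assoc]

lemma lis_eq_map (ω : List B) :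
    cs.leftInvSeq ω = (cs.rightInvSeq ω).map (fun t => π ω * t * (π ω)⁻¹) := by
  induction ω with
  | nil => simp
  | cons i ω ih =>
      show σ i :: (cs.leftInvSeq ω).map (MulAut.conj (σ i)) = _
      rw [ris_cons, map_cons, ih, map_map]
      congr 1
      · rw [wordProd_cons, mul_inv_rev, cs.inv_simple]
        simp [mul_assoc, cs.simple_mul_simple_cancel_left]
      · apply map_congr_left
        intro t _
        simp only [Function.comp_apply, MulAut.conj_apply, wordProd_cons, mul_inv_rev,
          cs.inv_simple]
        simp [mul_assoc]

lemma conj_injective (a : W) : Function.Injective (fun x : W => a⁻¹ * x * a) := by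
  intro x y hxy
  simpa using congrArg (fun z => a * z * a⁻¹) hxy

lemma conj_injective' (a : W) : Function.Injective (fun x : W => a * x * a⁻¹) := by
  intro x y hxy
  simpa using congrArg (fun z => a⁻¹ * z * a) hxy

lemma pal_word {t : W} (ht : cs.IsReflection t) :
    ∃ c : List B, π c = t ∧ Odd ((cs.rightInvSeq c).count t) := by
  obtain ⟨u₀, i, rfl⟩ := ht
  obtain ⟨μ, hμ⟩ := cs.wordProd_surjective u₀⁻¹
  refine ⟨μ.reverse ++ i :: μ, ?_, ?_⟩
  · rw [wordProd_append, wordProd_reverse, hμ, wordProd_cons, hμ]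
    simp [mul_assoc]
  · set t := u₀ * σ i * u₀⁻¹ with hht
    have hc1 : (π (i :: μ))⁻¹ * σ i * π (i :: μ) = t := by
      rw [wordProd_cons, hμ, mul_inv_rev, cs.inv_simple]
      simp [mul_assoc, cs.simple_mul_simple_cancel_left, hht]
    have hc2 : π μ * t * (π μ)⁻¹ = σ i := by
      rw [hμ, hht]
      simp [mul_assoc]
    rw [ris_append, count_append, ris_cons, count_cons]
    have e1 : ((cs.rightInvSeq μ.reverse).map
          (fun x => (π (i :: μ))⁻¹ * x * π (i :: μ))).count t
        = (cs.rightInvSeq μ.reverse).count (σ i) := by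
      rw [← hc1]
      exact count_map_of_injective _ _ (conj_injective _) _
    have e2 : (cs.rightInvSeq μ.reverse).count (σ i) = (cs.rightInvSeq μ).count t := by
      rw [cs.rightInvSeq_reverse, count_reverse, lis_eq_map cs, ← hc2]
      exact count_map_of_injective _ _ (conj_injective' _) _
    have hc0 : ((π μ)⁻¹ * σ i * π μ == t) = true := by
      rw [hμ, hht]
      simp
    rw [e1, e2, if_pos hc0]
    exact ⟨(cs.rightInvSeq μ).count t, by ring⟩

lemma odd_count_mem {L : List W} {t : W} (h : Odd (L.count t)) : t ∈ L := by
  rcases h with ⟨k, hk⟩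
  have : 0 < L.count t := by omega
  exact count_pos_iff.mp this

theorem mem_ris_of_inversion {ω : List B} (hω : cs.IsReduced ω) {t : W}
    (ht : cs.IsReflection t) (hlt : ℓ (π ω * t) < ℓ (π ω)) : t ∈ cs.rightInvSeq ω := by
  obtain ⟨β, hβred, hβ⟩ := cs.exists_reduced_word' (π ω * t)
  obtain ⟨c, hc, hodd⟩ := pal_word cs ht
  have hprod : π (β ++ c) = π ω := by
    rw [wordProd_append, ← hβ, hc, mul_assoc, ht.mul_self, mul_one]
  have hβeven : ¬ Odd ((cs.rightInvSeq β).count t) := by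
    intro h
    have hmem := odd_count_mem h
    have h2 := (cs.isRightInversion_of_mem_rightInvSeq hβred hmem).2
    rw [← hβ, mul_assoc, ht.mul_self, mul_one] at h2
    omega
  have hcount : Odd ((cs.rightInvSeq (β ++ c)).count t) := by
    rw [ris_append, count_append]
    have hfix : (π c)⁻¹ * t * π c = t := by rw [hc, ht.inv, ht.mul_self, one_mul]
    have e1 := count_map_of_injective (cs.rightInvSeq β)
      (fun x => (π c)⁻¹ * x * π c) (conj_injective _) t
    rw [hfix] at e1
    rw [e1]
    exact (Nat.not_odd_iff_even.mp hβeven).add_odd hodd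
  exact odd_count_mem ((count_parity cs hprod t).mp hcount)

theorem exists_eraseIdx {ω : List B} (hω : cs.IsReduced ω) {t : W}
    (ht : cs.IsReflection t) (hlt : ℓ (π ω * t) < ℓ (π ω)) :
    ∃ j < ω.length, π (ω.eraseIdx j) = π ω * t := by
  have hmem := mem_ris_of_inversion cs hω ht hlt
  obtain ⟨j, hj, hget⟩ := mem_iff_getElem.mp hmem
  have hj' : j < ω.length := by simpa using hj
  refine ⟨j, hj', ?_⟩
  rw [← cs.wordProd_mul_getD_rightInvSeq ω j]
  congr 1
  rw [getD_eq_getElem _ _ hj, hget]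

theorem length_add_length_of_mul_eq (w₀ : W) (hw₀ : ∀ w : W, ℓ w ≤ ℓ w₀)
    {u v : W} (huv : u * v = w₀) : ℓ u + ℓ v = ℓ w₀ := by
  obtain ⟨γ, hγred, hγ⟩ := cs.exists_reduced_word' w₀
  obtain ⟨α, hαred, hα⟩ := cs.exists_reduced_word' u
  obtain ⟨β, hβred, hβ⟩ := cs.exists_reduced_word' v
  have hrefl_mem : ∀ t : W, cs.IsReflection t → t ∈ cs.rightInvSeq γ := by
    intro t ht
    apply mem_ris_of_inversion cs hγred ht
    rw [← hγ]
    have h1 := ht.length_mul_left_ne w₀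
    have h2 := hw₀ (w₀ * t)
    omega
  have hDprod : π (α ++ β) = π γ := by
    rw [wordProd_append, ← hα, ← hβ, huv, hγ]
  have hγcount : ∀ t : W, cs.IsReflection t → (cs.rightInvSeq γ).count t = 1 := by
    intro t ht
    refine le_antisymm (nodup_iff_count_le_one.mp hγred.nodup_rightInvSeq t) ?_
    exact count_pos_iff.mpr (hrefl_mem t ht)
  have hDcount : ∀ t ∈ cs.rightInvSeq (α ++ β), (cs.rightInvSeq (α ++ β)).count t = 1 := by
    intro t htD
    have htrefl := cs.isReflection_of_mem_rightInvSeq _ htD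
    have hodd : Odd ((cs.rightInvSeq (α ++ β)).count t) := by
      rw [count_parity cs hDprod t, hγcount t htrefl]
      exact odd_one
    have hle : (cs.rightInvSeq (α ++ β)).count t ≤ 2 := by
      rw [ris_append, count_append]
      have n0 := hαred.nodup_rightInvSeq
      have n1 : ((cs.rightInvSeq α).map (fun x => (π β)⁻¹ * x * π β)).Nodup :=
        List.Nodup.map (conj_injective _) n0
      have n2 := hβred.nodup_rightInvSeq
      have := nodup_iff_count_le_one.mp n1 t
      have := nodup_iff_count_le_one.mp n2 t
      omega
    rcases hodd with ⟨k, hk⟩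
    omega
  have hDnodup : (cs.rightInvSeq (α ++ β)).Nodup := by
    refine nodup_iff_count_le_one.mpr (fun t => ?_)
    by_cases h : t ∈ cs.rightInvSeq (α ++ β)
    · rw [hDcount t h]
    · rw [count_eq_zero_of_not_mem h]
      omega
  have hsetseq : (cs.rightInvSeq (α ++ β)).toFinset = (cs.rightInvSeq γ).toFinset := by
    apply Finset.Subset.antisymm
    · intro t htm
      rw [mem_toFinset] at htm ⊢
      exact hrefl_mem t (cs.isReflection_of_mem_rightInvSeq _ htm)
    · intro t htm
      rw [mem_toFinset] at htm ⊢
      have htrefl := cs.isReflection_of_mem_rightInvSeq _ htm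
      apply odd_count_mem (t := t)
      rw [count_parity cs hDprod t, hγcount t htrefl]
      exact odd_one
  have hlen1 : (cs.rightInvSeq (α ++ β)).length = (cs.rightInvSeq γ).length := by
    rw [← toFinset_card_of_nodup hDnodup, ← toFinset_card_of_nodup hγred.nodup_rightInvSeq,
      hsetseq]
  have e1 : ℓ u = α.length := by rw [hα]; exact hαred
  have e2 : ℓ v = β.length := by rw [hβ]; exact hβred
  have e3 : ℓ w₀ = γ.length := by rw [hγ]; exact hγred
  rw [cs.length_rightInvSeq, cs.length_rightInvSeq, length_append] at hlen1
  omega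

lemma eraseIdx_append_helper : ∀ (p q : List B) (j : ℕ),
    (p ++ q).eraseIdx (p.length + j) = p ++ q.eraseIdx j := by
  intro p
  induction p with
  | nil => intro q j; simp
  | cons a p ih =>
      intro q j
      have h1 : (a :: p).length + j = (p.length + j) + 1 := by simp; omega
      rw [h1, cons_append, eraseIdx_cons_succ, ih, cons_append]

theorem step_lemma (w₀ : W) (hw₀ : ∀ w : W, ℓ w ≤ ℓ w₀) (i : B) (p q : List B)
    (hu : π (p ++ q) = w₀) (hlen : (p ++ q).length = ℓ w₀)
    (hip : cs.IsReduced (i :: p)) :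
    ∃ j < q.length, π (i :: (p ++ q.eraseIdx j)) = w₀ := by
  have hured : cs.IsReduced (p ++ q) := by
    show ℓ (π (p ++ q)) = (p ++ q).length
    rw [hu, hlen]
  have hqred : cs.IsReduced q := by
    have := CoxeterSystem.IsReduced.drop hured p.length
    rwa [drop_left] at this
  have hx : ℓ (π (i :: p)) = p.length + 1 := by
    have := hip
    simpa [CoxeterSystem.IsReduced] using this
  have htrefl : cs.IsReflection (w₀⁻¹ * σ i * w₀) := by
    have := (cs.isReflection_simple i).conj w₀⁻¹
    simpa using this
  have hπq : π q = (π p)⁻¹ * w₀ := by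
    rw [← hu, wordProd_append]
    group
  have hqt : π q * (w₀⁻¹ * σ i * w₀) = (π (i :: p))⁻¹ * w₀ := by
    rw [hπq, wordProd_cons, mul_inv_rev, cs.inv_simple]
    simp [mul_assoc]
  have hLL : ℓ (π (i :: p)) + ℓ ((π (i :: p))⁻¹ * w₀) = ℓ w₀ :=
    length_add_length_of_mul_eq cs w₀ hw₀ (by group)
  have hxle : ℓ (π (i :: p)) ≤ ℓ w₀ := hw₀ _
  have hlen2 : ℓ w₀ = p.length + q.length := by
    rw [← hlen, length_append]
  have hqlen : ℓ (π q) = q.length := hqred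
  have hlt : ℓ (π q * (w₀⁻¹ * σ i * w₀)) < ℓ (π q) := by
    rw [hqt, hqlen]
    omega
  obtain ⟨j, hj, hje⟩ := exists_eraseIdx cs hqred htrefl hlt
  refine ⟨j, hj, ?_⟩
  rw [wordProd_cons, wordProd_append, hje, hqt, wordProd_cons, mul_inv_rev, cs.inv_simple]
  simp [mul_assoc, cs.simple_mul_simple_cancel_left]

end ExchAux

/-- The exchange move on reduced words of `w₀`: `v` is obtained from `u` by prepending a
letter `i` and deleting the (unique) letter whose removal leaves a reduced word of `w₀`. -/
def ExchMove {B W : Type*} [Group W] {M : CoxeterMatrix B} (cs : CoxeterSystem M W)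
    (w₀ : W) (u v : List B) : Prop :=
  ∃ (i : B) (j : ℕ), j < u.length ∧ v = i :: u.eraseIdx j ∧
    cs.wordProd v = w₀ ∧ v.length = cs.length w₀

/-- The transition graph of the exchange chain on `Red(w₀)` is strongly connected: any two
reduced words of the longest element `w₀` of a finite Coxeter system are connected by a
finite sequence of exchange moves. -/
theorem exchange_graph_strongly_connected {B W : Type*} [Group W] [Finite W]
    {M : CoxeterMatrix B} (cs : CoxeterSystem M W)
    (w₀ : W) (hw₀ : ∀ w : W, cs.length w ≤ cs.length w₀)
    (u v : List B)
    (hu : cs.wordProd u = w₀ ∧ u.length = cs.length w₀)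
    (hv : cs.wordProd v = w₀ ∧ v.length = cs.length w₀) :
    Relation.ReflTransGen (ExchMove cs w₀) u v := by
  classical
  have hvred : cs.IsReduced v := by
    show cs.length (cs.wordProd v) = v.length
    rw [hv.1, hv.2]
  have key : ∀ k : ℕ, ∀ u' : List B, cs.wordProd u' = w₀ → u'.length = cs.length w₀ →
      v.drop k <+: u' → Relation.ReflTransGen (ExchMove cs w₀) u' v := by
    intro k
    induction k with
    | zero =>
        intro u' h1 h2 hpre
        rw [List.drop_zero] at hpre
        have : v = u' := hpre.eq_of_length (by rw [hv.2, h2])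
        rw [← this]
    | succ k ih =>
        intro u' h1 h2 hpre
        by_cases hk : k < v.length
        · have hdk : v.drop k = v[k] :: v.drop (k + 1) := List.drop_eq_getElem_cons hk
          obtain ⟨q, hq⟩ := hpre
          have hipred : cs.IsReduced (v[k] :: v.drop (k + 1)) := by
            rw [← hdk]
            exact CoxeterSystem.IsReduced.drop hvred k
          obtain ⟨j, hjq, hjp⟩ := ExchAux.step_lemma cs w₀ hw₀ v[k] (v.drop (k + 1)) q
            (by rw [hq]; exact h1) (by rw [hq]; exact h2) hipred
          set u'' := v[k] :: (v.drop (k + 1) ++ q.eraseIdx j) with hu''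
          have hlenu'' : u''.length = cs.length w₀ := by
            have h3 : (q.eraseIdx j).length = q.length - 1 := by
              rw [List.length_eraseIdx, if_pos hjq]
            have h4 : u'.length = (v.drop (k + 1)).length + q.length := by
              rw [← hq, List.length_append]
            simp only [hu'', List.length_cons, List.length_append, h3]
            omega
          have hmove : ExchMove cs w₀ u' u'' := by
            refine ⟨v[k], (v.drop (k + 1)).length + j, ?_, ?_, hjp, hlenu''⟩
            · rw [← hq, List.length_append]
              omega
            · rw [← hq, ExchAux.eraseIdx_append_helper]
          have hpre'' : v.drop k <+: u'' := by
            rw [hdk]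
            exact ⟨q.eraseIdx j, rfl⟩
          exact Relation.ReflTransGen.head hmove (ih u'' hjp hlenu'' hpre'')
        · apply ih u' h1 h2
          have h0 : v.drop (k + 1) = [] := List.drop_eq_nil_of_le (by omega)
          have h0' : v.drop k = [] := List.drop_eq_nil_of_le (by omega)
          rw [h0']
          exact List.nil_prefix
  exact key v.length u hu.1 hu.2 (by simp)

end
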